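/- Let f : (ZMod 2)^n → ZMod 2 be a Boolean function with at least four essential variables whose Zhegalkin polynomial has degree two, i.e. f(x_1, …, x_n) = Σ_{1 ≤ i < j ≤ n} a_{ij} x_i x_j + Σ_{1 ≤ i ≤ n} a_i x_i + c over the two-element field, with a_{ij} ≠ 0 for at least one pair i < j. Then the arity gap of f is one: there exist distinct indices i, j with x_i, x_j essential in f such that ess f_{i←j} = ess f − 1. -/

import Mathlib

/-- The `i`-th variable is essential in `f`. -/
def Essential {A B : Type*} {n : ℕ} (f : (Fin n → A) → B) (i : Fin n) : Prop :=
  ∃ (a : Fin n → A) (b : A), f a ≠ f (Function.update a i b)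

/-- The essential arity of `f`: the number of essential variables. -/
noncomputable def essArity {A B : Type*} {n : ℕ} (f : (Fin n → A) → B) : ℕ :=
  Set.ncard {i : Fin n | Essential f i}

/-- The variable identification minor `f_{i←j}`, substituting `x j` for `x i`. -/
def idMinor {A B : Type*} {n : ℕ} (f : (Fin n → A) → B) (i j : Fin n) :
    (Fin n → A) → B :=
  fun x => f (Function.update x i (x j))

/-- The arity gap of `f`:
`ess f − max { ess f_{i←j} : i ≠ j, x_i and x_j essential in f }`. -/
noncomputable def arityGap {A B : Type*} {n : ℕ} (f : (Fin n → A) → B) : ℕ :=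
  essArity f -
    sSup {m : ℕ | ∃ i j : Fin n, i ≠ j ∧ Essential f i ∧ Essential f j ∧
      m = essArity (idMinor f i j)}

namespace Stmt5Aux

variable {n : ℕ}

lemma zadd_self (u : ZMod 2) : u + u = 0 := by revert u; decide

lemma zcases (u : ZMod 2) : u = 0 ∨ u = 1 := by revert u; decide

def Asym (a : Fin n → Fin n → ZMod 2) (k l : Fin n) : ZMod 2 :=
  if k < l then a k l else if l < k then a l k else 0


lemma deriv (f : (Fin n → ZMod 2) → ZMod 2) (a : Fin n → Fin n → ZMod 2)
    (b : Fin n → ZMod 2) (c : ZMod 2)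
    (hrep : ∀ x : Fin n → ZMod 2,
      f x = (∑ p ∈ Finset.univ.filter (fun p : Fin n × Fin n => p.1 < p.2),
              a p.1 p.2 * x p.1 * x p.2) + (∑ i, b i * x i) + c)
    (k : Fin n) (x : Fin n → ZMod 2) :
    f (Function.update x k 1) + f (Function.update x k 0)
      = b k + ∑ l, Asym a k l * x l := by
  classical
  set u1 := Function.update x k 1 with hu1
  set u0 := Function.update x k 0 with hu0
  rw [hrep u1, hrep u0]
  have hlin : (∑ i, b i * u1 i) + (∑ i, b i * u0 i) = b k := by
    rw [← Finset.sum_add_distrib]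
    have : ∀ i : Fin n, b i * u1 i + b i * u0 i = if i = k then b k else 0 := by
      intro i
      by_cases h : i = k
      · subst h; simp [hu1, hu0]
      · simp [hu1, hu0, Function.update_of_ne h, ← add_mul, zadd_self, h]
    rw [Finset.sum_congr rfl (fun i _ => this i)]
    simp
  have hquad : (∑ p ∈ Finset.univ.filter (fun p : Fin n × Fin n => p.1 < p.2),
        a p.1 p.2 * u1 p.1 * u1 p.2)
      + (∑ p ∈ Finset.univ.filter (fun p : Fin n × Fin n => p.1 < p.2),
        a p.1 p.2 * u0 p.1 * u0 p.2) = ∑ l, Asym a k l * x l := by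
    rw [← Finset.sum_add_distrib]
    have step1 : ∀ p ∈ Finset.univ.filter (fun p : Fin n × Fin n => p.1 < p.2),
        a p.1 p.2 * u1 p.1 * u1 p.2 + a p.1 p.2 * u0 p.1 * u0 p.2
          = (if p.1 = k then a k p.2 * x p.2 else 0)
            + (if p.2 = k then a p.1 k * x p.1 else 0) := by
      intro p hp
      simp only [Finset.mem_filter] at hp
      have hne : p.1 ≠ p.2 := ne_of_lt hp.2
      by_cases h1 : p.1 = k
      · have h2 : p.2 ≠ k := fun h => hne (h1.trans h.symm)
        simp [h1, h2, hu1, hu0, Function.update_of_ne h2]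
      · by_cases h2 : p.2 = k
        · simp [h1, h2, hu1, hu0, Function.update_of_ne h1]
        · have e1 : u1 p.1 = x p.1 := Function.update_of_ne h1 _ _
          have e2 : u1 p.2 = x p.2 := Function.update_of_ne h2 _ _
          have e3 : u0 p.1 = x p.1 := Function.update_of_ne h1 _ _
          have e4 : u0 p.2 = x p.2 := Function.update_of_ne h2 _ _
          simp [h1, h2, e1, e2, e3, e4, zadd_self]
    rw [Finset.sum_congr rfl step1, Finset.sum_add_distrib]
    have emb1 : Function.Embedding (Fin n) (Fin n × Fin n) :=
      ⟨fun l => (k, l), fun p q h => by simpa using congrArg Prod.snd h⟩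
    have sumA : (∑ p ∈ Finset.univ.filter (fun p : Fin n × Fin n => p.1 < p.2),
        if p.1 = k then a k p.2 * x p.2 else 0)
        = ∑ l ∈ Finset.univ.filter (fun l => k < l), a k l * x l := by
      rw [← Finset.sum_filter]
      have hset : (Finset.univ.filter (fun p : Fin n × Fin n => p.1 < p.2)).filter
            (fun p => p.1 = k)
          = (Finset.univ.filter (fun l : Fin n => k < l)).map
            ⟨fun l => (k, l), fun p q h => by simpa using congrArg Prod.snd h⟩ := by
        ext ⟨p1, p2⟩
        simp only [Finset.mem_filter, Finset.mem_map, Finset.mem_univ, true_and,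
          Function.Embedding.coeFn_mk, Prod.mk.injEq]
        constructor
        · rintro ⟨hlt, rfl⟩; exact ⟨p2, hlt, rfl⟩
        · rintro ⟨l, hl, rfl, rfl⟩; exact ⟨hl, rfl⟩
      rw [hset, Finset.sum_map]
      rfl
    have sumB : (∑ p ∈ Finset.univ.filter (fun p : Fin n × Fin n => p.1 < p.2),
        if p.2 = k then a p.1 k * x p.1 else 0)
        = ∑ l ∈ Finset.univ.filter (fun l => l < k), a l k * x l := by
      rw [← Finset.sum_filter]
      have hset : (Finset.univ.filter (fun p : Fin n × Fin n => p.1 < p.2)).filter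
            (fun p => p.2 = k)
          = (Finset.univ.filter (fun l : Fin n => l < k)).map
            ⟨fun l => (l, k), fun p q h => by simpa using congrArg Prod.fst h⟩ := by
        ext ⟨p1, p2⟩
        simp only [Finset.mem_filter, Finset.mem_map, Finset.mem_univ, true_and,
          Function.Embedding.coeFn_mk, Prod.mk.injEq]
        constructor
        · rintro ⟨hlt, rfl⟩; exact ⟨p1, hlt, rfl⟩
        · rintro ⟨l, hl, rfl, rfl⟩; exact ⟨hl, rfl⟩
      rw [hset, Finset.sum_map]
      rfl
    rw [sumA, sumB]
    have expand : ∀ l : Fin n, Asym a k l * x l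
        = (if k < l then a k l * x l else 0) + (if l < k then a l k * x l else 0) := by
      intro l
      unfold Asym
      rcases lt_trichotomy k l with h | h | h
      · simp [h, asymm h]
      · simp [h, lt_irrefl]
      · simp [h, asymm h]
    rw [Finset.sum_congr rfl (fun l _ => expand l), Finset.sum_add_distrib,
      Finset.sum_filter, Finset.sum_filter]
  calc (∑ p ∈ Finset.univ.filter (fun p : Fin n × Fin n => p.1 < p.2),
          a p.1 p.2 * u1 p.1 * u1 p.2) + (∑ i, b i * u1 i) + c
        + ((∑ p ∈ Finset.univ.filter (fun p : Fin n × Fin n => p.1 < p.2),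
          a p.1 p.2 * u0 p.1 * u0 p.2) + (∑ i, b i * u0 i) + c)
      = ((∑ p ∈ Finset.univ.filter (fun p : Fin n × Fin n => p.1 < p.2),
          a p.1 p.2 * u1 p.1 * u1 p.2)
        + (∑ p ∈ Finset.univ.filter (fun p : Fin n × Fin n => p.1 < p.2),
          a p.1 p.2 * u0 p.1 * u0 p.2))
        + ((∑ i, b i * u1 i) + (∑ i, b i * u0 i)) + (c + c) := by ring
    _ = b k + ∑ l, Asym a k l * x l := by
        rw [hquad, hlin, zadd_self c, add_zero, add_comm]


lemma Asym_diag (a : Fin n → Fin n → ZMod 2) (k : Fin n) : Asym a k k = 0 := by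
  simp [Asym]

lemma Asym_symm (a : Fin n → Fin n → ZMod 2) (k l : Fin n) : Asym a k l = Asym a l k := by
  unfold Asym
  rcases lt_trichotomy k l with h | h | h
  · simp [h, asymm h]
  · simp [h]
  · simp [h, asymm h]


lemma sum_pair_congr {M : Type*} [AddCommMonoid M] (i j : Fin n) (hij : i ≠ j)
    (F G : Fin n → M) (h : ∀ l, l ≠ i → l ≠ j → F l = G l)
    (hsum : F i + F j = G i + G j) : ∑ l, F l = ∑ l, G l := by
  classical
  have hji : j ∈ Finset.univ.erase i := Finset.mem_erase.2 ⟨Ne.symm hij, Finset.mem_univ j⟩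
  have key : ∀ H : Fin n → M, ∑ l, H l = H i + (H j + ∑ l ∈ (Finset.univ.erase i).erase j, H l) := by
    intro H
    rw [← Finset.add_sum_erase _ _ (Finset.mem_univ i), ← Finset.add_sum_erase _ _ hji]
  rw [key F, key G, ← add_assoc, ← add_assoc, hsum]
  congr 1
  apply Finset.sum_congr rfl
  intro l hl
  simp only [Finset.mem_erase] at hl
  exact h l hl.2.1 hl.1


lemma essential_iff_of_deriv (g : (Fin n → ZMod 2) → ZMod 2) (k : Fin n)
    (c0 : ZMod 2) (co : Fin n → ZMod 2) (hk : co k = 0)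
    (h : ∀ x, g (Function.update x k 1) + g (Function.update x k 0)
      = c0 + ∑ l, co l * x l) :
    Essential g k ↔ (c0 ≠ 0 ∨ ∃ l, co l ≠ 0) := by
  constructor
  · rintro ⟨x, t, hx⟩
    by_contra hcon
    push_neg at hcon
    obtain ⟨hc0, hco⟩ := hcon
    have hzero : ∀ y, g (Function.update y k 1) = g (Function.update y k 0) := by
      intro y
      have := h y
      simp only [hc0, hco, zero_mul, Finset.sum_const_zero, add_zero, zero_add] at this
      rcases zcases (g (Function.update y k 1)) with h1 | h1 <;>
        rcases zcases (g (Function.update y k 0)) with h2 | h2 <;>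
          simp [h1, h2] at this ⊢
    have hconst : ∀ y (t : ZMod 2), g (Function.update y k t) = g y := by
      intro y t
      have hself : g (Function.update y k (y k)) = g y := by rw [Function.update_eq_self]
      have h01 : g (Function.update y k 0) = g (Function.update y k 1) := (hzero y).symm
      rcases zcases t with rfl | rfl <;> rcases zcases (y k) with hy | hy <;>
        simp only [← hself, hy] <;> rw [hzero y] at * <;> simp [hzero y, h01]
    exact hx (hconst x t).symm
  · intro hc
    have key : ∀ x : Fin n → ZMod 2, c0 + ∑ l, co l * x l ≠ 0 → Essential g k := by
      intro x hx
      refine ⟨Function.update x k 0, 1, fun heq => ?_⟩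
      rw [Function.update_idem] at heq
      have := h x
      rw [← heq] at this
      rw [zadd_self] at this
      exact hx this.symm
    rcases hc with hc | ⟨l, hl⟩
    · exact key 0 (by simpa using hc)
    · by_cases hc0 : c0 = 0
      · have hlk : l ≠ k := fun h => hl (h ▸ hk)
        apply key (fun m => if m = l then 1 else 0)
        have : ∑ m, co m * (if m = l then (1:ZMod 2) else 0) = co l := by
          rw [Finset.sum_eq_single l] <;> simp +contextual
        rw [this, hc0, zero_add]
        exact hl
      · exact key 0 (by simpa using hc0)




section DevD
variable {n : ℕ}

lemma zeq (u v d : ZMod 2) (h : u + v = d) : u = d + v := by revert u v d; decide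

lemma znz (u : ZMod 2) (h : u ≠ 0) : u = 1 := by revert u; decide

lemma minor_update_i (f : (Fin n → ZMod 2) → ZMod 2) (i j : Fin n) (hij : i ≠ j)
    (x : Fin n → ZMod 2) (t : ZMod 2) :
    idMinor f i j (Function.update x i t) = idMinor f i j x := by
  unfold idMinor
  rw [Function.update_idem, Function.update_of_ne hij.symm]

lemma not_essential_minor_i (f : (Fin n → ZMod 2) → ZMod 2) (i j : Fin n)
    (hij : i ≠ j) : ¬ Essential (idMinor f i j) i := by
  rintro ⟨x, t, hx⟩
  exact hx (minor_update_i f i j hij x t).symm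

lemma minor_deriv_k (f : (Fin n → ZMod 2) → ZMod 2) (a : Fin n → Fin n → ZMod 2)
    (b : Fin n → ZMod 2) (c : ZMod 2)
    (hrep : ∀ x : Fin n → ZMod 2,
      f x = (∑ p ∈ Finset.univ.filter (fun p : Fin n × Fin n => p.1 < p.2),
              a p.1 p.2 * x p.1 * x p.2) + (∑ i, b i * x i) + c)
    (i j : Fin n) (hij : i ≠ j)
    (k : Fin n) (hki : k ≠ i) (hkj : k ≠ j) (x : Fin n → ZMod 2) :
    idMinor f i j (Function.update x k 1) + idMinor f i j (Function.update x k 0)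
      = b k + ∑ l, (if l = i then 0 else if l = j then Asym a k i + Asym a k j
          else Asym a k l) * x l := by
  have h1 : ∀ t, idMinor f i j (Function.update x k t)
      = f (Function.update (Function.update x i (x j)) k t) := by
    intro t
    unfold idMinor
    rw [Function.update_of_ne hkj.symm, Function.update_comm hki]
  rw [h1 1, h1 0, deriv f a b c hrep k (Function.update x i (x j))]
  congr 1
  apply sum_pair_congr i j hij
  · intro l hli hlj
    rw [Function.update_of_ne hli, if_neg hli, if_neg hlj]
  · simp only [Function.update_self, Function.update_of_ne hij.symm,
      eq_self_iff_true, if_true, if_neg hij.symm]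
    ring

lemma minor_deriv_j (f : (Fin n → ZMod 2) → ZMod 2) (a : Fin n → Fin n → ZMod 2)
    (b : Fin n → ZMod 2) (c : ZMod 2)
    (hrep : ∀ x : Fin n → ZMod 2,
      f x = (∑ p ∈ Finset.univ.filter (fun p : Fin n × Fin n => p.1 < p.2),
              a p.1 p.2 * x p.1 * x p.2) + (∑ i, b i * x i) + c)
    (i j : Fin n) (hij : i ≠ j) (x : Fin n → ZMod 2) :
    idMinor f i j (Function.update x j 1) + idMinor f i j (Function.update x j 0)
      = (b i + b j + Asym a i j) + ∑ l, (if l = i then 0 else if l = j then 0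
          else Asym a i l + Asym a j l) * x l := by
  have e1 : ∀ t, idMinor f i j (Function.update x j t)
      = f (Function.update (Function.update x j t) i t) := by
    intro t; unfold idMinor; rw [Function.update_self]
  set w : Fin n → ZMod 2 := Function.update x i 0 with hw
  have hcomm : ∀ t, Function.update (Function.update x j t) i 0
      = Function.update w j t := by
    intro t; rw [hw, Function.update_comm hij.symm]
  have hd1 := deriv f a b c hrep i (Function.update x j 1)
  have hd2 := deriv f a b c hrep j w
  have hsum2 : (∑ l, Asym a i l * (Function.update x j 1) l)
      + (∑ l, Asym a j l * w l)
      = Asym a i j + ∑ l, (if l = i then 0 else if l = j then 0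
          else Asym a i l + Asym a j l) * x l := by
    have hsum : (∑ l, Asym a i l * (Function.update x j 1) l)
        + (∑ l, Asym a j l * w l)
        = ∑ l, ((if l = i then Asym a i j else 0)
            + (if l = i then 0 else if l = j then 0
                else Asym a i l + Asym a j l) * x l) := by
      rw [← Finset.sum_add_distrib]
      apply sum_pair_congr i j hij
      · intro l hli hlj
        rw [Function.update_of_ne hlj, hw, Function.update_of_ne hli,
          if_neg hli, if_neg hli, if_neg hlj]
        ring
      · rw [hw]
        simp only [Function.update_self, Function.update_of_ne hij,
          Function.update_of_ne hij.symm, Asym_diag, eq_self_iff_true, if_true,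
          if_neg hij, if_neg hij.symm]
        ring
    rw [hsum, Finset.sum_add_distrib, Finset.sum_ite_eq' Finset.univ i
      (fun _ => Asym a i j)]
    simp only [Finset.mem_univ, if_true, ite_true]
  calc idMinor f i j (Function.update x j 1) + idMinor f i j (Function.update x j 0)
      = f (Function.update (Function.update x j 1) i 1)
        + f (Function.update (Function.update x j 0) i 0) := by rw [e1 1, e1 0]
    _ = ((b i + ∑ l, Asym a i l * (Function.update x j 1) l)
          + f (Function.update (Function.update x j 1) i 0))
        + f (Function.update (Function.update x j 0) i 0) := by
          rw [zeq _ _ _ hd1]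
    _ = (b i + ∑ l, Asym a i l * (Function.update x j 1) l)
        + (f (Function.update w j 1) + f (Function.update w j 0)) := by
          rw [hcomm 1, hcomm 0]; ring
    _ = (b i + ∑ l, Asym a i l * (Function.update x j 1) l)
        + (b j + ∑ l, Asym a j l * w l) := by rw [hd2]
    _ = (b i + b j + Asym a i j) + ∑ l, (if l = i then 0 else if l = j then 0
          else Asym a i l + Asym a j l) * x l := by linear_combination hsum2

end DevD

section DevE
variable {n : ℕ}

def EssP (A : Fin n → Fin n → ZMod 2) (b : Fin n → ZMod 2) (k : Fin n) : Prop :=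
  b k ≠ 0 ∨ ∃ l, A k l ≠ 0

def Twin (A : Fin n → Fin n → ZMod 2) (b : Fin n → ZMod 2) (i j : Fin n) : Prop :=
  b i + b j + A i j = 0 ∧ ∀ l, l ≠ i → l ≠ j → A i l = A j l

def Blk (A : Fin n → Fin n → ZMod 2) (b : Fin n → ZMod 2) (i j k : Fin n) : Prop :=
  b k = 0 ∧ A k i ≠ 0 ∧ A k j ≠ 0 ∧ ∀ l, l ≠ i → l ≠ j → A k l = 0

lemma zfact1 (bp bq br x : ZMod 2) (h1 : bp + br + x = 0) (h2 : bq + br + x = 0)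
    (h3 : bp + bq + 1 = 0) : False := by revert bp bq br x; decide

lemma zfact2 (u v x : ZMod 2) (hu : u = 0) (hv : v = 0) (h : u + v + x = 0) :
    x = 0 := by revert u v x; decide

lemma zfact3 (u v : ZMod 2) (h : u + v = 0) : u = v := by revert u v; decide

lemma zfact4 (u v : ZMod 2) (h : u + v ≠ 0) : u ≠ 0 ∨ v ≠ 0 := by revert u v; decide

lemma pick (A : Fin n → Fin n → ZMod 2) (b : Fin n → ZMod 2)
    (hE : 4 ≤ Set.ncard {k : Fin n | EssP A b k}) (i j k : Fin n) :
    ∃ s, EssP A b s ∧ s ≠ i ∧ s ≠ j ∧ s ≠ k := by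
  by_contra h
  push_neg at h
  have hsub : {k' : Fin n | EssP A b k'} ⊆ ({i, j, k} : Set (Fin n)) := by
    intro s hs
    simp only [Set.mem_insert_iff, Set.mem_singleton_iff]
    by_contra hc
    push_neg at hc
    exact hc.2.2 (h s hs hc.1 hc.2.1)
  have h1 := Set.ncard_le_ncard hsub (Set.toFinite _)
  have h2 := Set.ncard_insert_le i ({j, k} : Set (Fin n))
  have h3 := Set.ncard_insert_le j ({k} : Set (Fin n))
  have h4 := Set.ncard_singleton k
  omega

lemma exists_good (A : Fin n → Fin n → ZMod 2) (b : Fin n → ZMod 2)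
    (hsymm : ∀ k l, A k l = A l k) (hdiag : ∀ k, A k k = 0)
    (hedge : ∃ p q, A p q ≠ 0)
    (hE : 4 ≤ Set.ncard {k : Fin n | EssP A b k}) :
    ∃ i j, i ≠ j ∧ EssP A b i ∧ EssP A b j ∧ ¬ Twin A b i j ∧
      ∀ k, ¬ Blk A b i j k := by
  obtain ⟨p, q, hpq⟩ := hedge
  have hpq' : p ≠ q := fun h => hpq (h ▸ hdiag q)
  have hEp : EssP A b p := Or.inr ⟨q, hpq⟩
  have hEq : EssP A b q := Or.inr ⟨p, by rw [hsymm]; exact hpq⟩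
  have hnt : ∃ i j, i ≠ j ∧ EssP A b i ∧ EssP A b j ∧ ¬ Twin A b i j := by
    by_cases h1 : Twin A b p q
    · obtain ⟨r, hEr, hrp, hrq, -⟩ := pick A b hE p q q
      by_cases h2 : Twin A b p r
      · refine ⟨q, r, fun h => hrq h.symm, hEq, hEr, fun h3 => ?_⟩
        have e1 : A p r = A q r := h1.2 r hrp hrq
        have e2 := h2.1
        have e3 := h3.1
        have e4 := h1.1
        have e5 : A p q = 1 := znz _ hpq
        rw [e5] at e4
        rw [e1] at e2
        exact zfact1 _ _ _ _ e2 e3 e4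
      · exact ⟨p, r, fun h => hrp h.symm, hEp, hEr, h2⟩
    · exact ⟨p, q, hpq', hEp, hEq, h1⟩
  obtain ⟨i, j, hij, hEi, hEj, hTij⟩ := hnt
  by_cases hB : ∃ k, Blk A b i j k
  · obtain ⟨k, hbk, hki', hkj', hkN⟩ := hB
    have hkik : k ≠ i := fun h => hki' (by rw [h]; exact hdiag i)
    have hkjk : k ≠ j := fun h => hkj' (by rw [h]; exact hdiag j)
    have hEk : EssP A b k := Or.inr ⟨i, hki'⟩
    by_cases hTik : Twin A b i k
    · by_cases hTjk : Twin A b j k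
      · -- Case A
        have hAij : A i j ≠ 0 := by
          have e := hTik.2 j hij.symm hkjk.symm
          rw [e]
          exact hkj'
        have hNi : ∀ l, l ≠ j → l ≠ k → A i l = 0 := by
          intro l hlj hlk
          by_cases hli : l = i
          · rw [hli]; exact hdiag i
          · rw [hTik.2 l hli hlk]
            exact hkN l hli hlj
        have hNj : ∀ l, l ≠ i → l ≠ k → A j l = 0 := by
          intro l hli hlk
          by_cases hlj : l = j
          · rw [hlj]; exact hdiag j
          · rw [hTjk.2 l hlj hlk]
            exact hkN l hli hlj
        obtain ⟨s, hEs, hsi, hsj, hsk⟩ := pick A b hE i j k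
        refine ⟨i, s, fun h => hsi h.symm, hEi, hEs, fun hT => ?_, ?_⟩
        · have e := hT.2 j hij.symm hsj.symm
          exact hAij (by rw [e, hsymm]; exact hNj s hsi hsk)
        · rintro m ⟨hbm, hmi, hms, hmN⟩
          have hmi' : A i m ≠ 0 := by rw [hsymm]; exact hmi
          by_cases hmj : m = j
          · exact hms (by rw [hmj]; exact hNj s hsi hsk)
          · by_cases hmk : m = k
            · exact hms (by rw [hmk]; exact hkN s hsi hsj)
            · exact hmi' (hNi m hmj hmk)
      · -- Case C
        refine ⟨j, k, fun h => hkjk h.symm, hEj, hEk, hTjk, ?_⟩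
        rintro m ⟨hbm, hmj, hmk, hmN⟩
        have hmj' : m ≠ j := fun h => hmj (by rw [h]; exact hdiag j)
        have hm : m = i := by
          by_contra hmi
          exact hmk (by rw [hsymm]; exact hkN m hmi hmj')
        rw [hm] at hbm
        have h1 := hTik.1
        have h2 : A i k = 0 := zfact2 _ _ _ hbm hbk h1
        exact hki' (by rw [hsymm]; exact h2)
    · -- Case B
      by_cases hB2 : ∃ m, Blk A b i k m
      · obtain ⟨m, hbm, hmi, hmk, hmN⟩ := hB2
        have hmi' : m ≠ i := fun h => hmi (by rw [h]; exact hdiag i)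
        have hmj : m = j := by
          by_contra hmj
          exact hmk (by rw [hsymm]; exact hkN m hmi' hmj)
        rw [hmj] at hbm hmi hmk hmN
        have hTjk : ¬ Twin A b j k := fun hT => hmk (zfact2 _ _ _ hbm hbk hT.1)
        by_cases hB3 : ∃ m', Blk A b j k m'
        · obtain ⟨m', hbm', hm'j, hm'k, hm'N⟩ := hB3
          have hm'j' : m' ≠ j := fun h => hm'j (by rw [h]; exact hdiag j)
          have hm'i : m' = i := by
            by_contra hc
            exact hm'k (by rw [hsymm]; exact hkN m' hc hm'j')
          rw [hm'i] at hbm' hm'j hm'k hm'N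
          obtain ⟨s, hEs, hsi, hsj, hsk⟩ := pick A b hE i j k
          refine ⟨k, s, fun h => hsk h.symm, hEk, hEs, fun hT => ?_, ?_⟩
          · have e := hT.2 j hkjk.symm hsj.symm
            exact hkj' (by rw [e, hsymm]; exact hmN s hsi hsk)
          · rintro m2 ⟨hbm2, hm2k, hm2s, hm2N⟩
            by_cases h2i : m2 = i
            · exact hm2s (by rw [h2i]; exact hm'N s hsj hsk)
            · by_cases h2j : m2 = j
              · exact hm2s (by rw [h2j]; exact hmN s hsi hsk)
              · exact hm2k (by rw [hsymm]; exact hkN m2 h2i h2j)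
        · push_neg at hB3
          exact ⟨j, k, fun h => hkjk h.symm, hEj, hEk, hTjk, hB3⟩
      · push_neg at hB2
        exact ⟨i, k, fun h => hkik h.symm, hEi, hEk, hTik, hB2⟩
  · push_neg at hB
    exact ⟨i, j, hij, hEi, hEj, hTij, hB⟩

end DevE

section DevF
variable {n : ℕ}

lemma ess_f (f : (Fin n → ZMod 2) → ZMod 2) (a : Fin n → Fin n → ZMod 2)
    (b : Fin n → ZMod 2) (c : ZMod 2)
    (hrep : ∀ x : Fin n → ZMod 2,
      f x = (∑ p ∈ Finset.univ.filter (fun p : Fin n × Fin n => p.1 < p.2),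
              a p.1 p.2 * x p.1 * x p.2) + (∑ i, b i * x i) + c)
    (k : Fin n) : Essential f k ↔ EssP (Asym a) b k :=
  essential_iff_of_deriv f k (b k) (Asym a k) (Asym_diag a k) (deriv f a b c hrep k)

lemma minor_ess_iff (f : (Fin n → ZMod 2) → ZMod 2) (a : Fin n → Fin n → ZMod 2)
    (b : Fin n → ZMod 2) (c : ZMod 2)
    (hrep : ∀ x : Fin n → ZMod 2,
      f x = (∑ p ∈ Finset.univ.filter (fun p : Fin n × Fin n => p.1 < p.2),
              a p.1 p.2 * x p.1 * x p.2) + (∑ i, b i * x i) + c)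
    (i j : Fin n) (hij : i ≠ j) (hEj : EssP (Asym a) b j)
    (hT : ¬ Twin (Asym a) b i j) (hBlk : ∀ k, ¬ Blk (Asym a) b i j k)
    (k : Fin n) :
    Essential (idMinor f i j) k ↔ (Essential f k ∧ k ≠ i) := by
  by_cases hki : k = i
  · subst hki
    constructor
    · intro h; exact absurd h (not_essential_minor_i f k j hij)
    · rintro ⟨-, h⟩; exact absurd rfl h
  · by_cases hkj : k = j
    · subst hkj
      rw [essential_iff_of_deriv (idMinor f i k) k (b i + b k + Asym a i k)
        (fun l => if l = i then 0 else if l = k then 0 else Asym a i l + Asym a k l)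
        (by simp [Ne.symm hki]) (minor_deriv_j f a b c hrep i k hij)]
      constructor
      · intro _
        exact ⟨(ess_f f a b c hrep k).2 hEj, hki⟩
      · intro _
        by_contra hcon
        push_neg at hcon
        apply hT
        refine ⟨hcon.1, fun l hli hlj => ?_⟩
        have h0 := hcon.2 l
        rw [if_neg hli, if_neg hlj] at h0
        exact zfact3 _ _ h0
    · rw [essential_iff_of_deriv (idMinor f i j) k (b k)
        (fun l => if l = i then 0 else if l = j then Asym a k i + Asym a k j
          else Asym a k l)
        (by rw [if_neg hki, if_neg hkj]; exact Asym_diag a k)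
        (minor_deriv_k f a b c hrep i j hij k hki hkj),
        ess_f f a b c hrep k]
      constructor
      · rintro (hbk | ⟨l, hl⟩)
        · exact ⟨Or.inl hbk, hki⟩
        · refine ⟨?_, hki⟩
          by_cases hli : l = i
          · exfalso; rw [if_pos hli] at hl; exact hl rfl
          · by_cases hlj : l = j
            · rw [if_neg hli, if_pos hlj] at hl
              rcases zfact4 _ _ hl with h | h
              · exact Or.inr ⟨i, h⟩
              · exact Or.inr ⟨j, h⟩
            · rw [if_neg hli, if_neg hlj] at hl
              exact Or.inr ⟨l, hl⟩
      · rintro ⟨hE, -⟩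
        by_contra hcon
        push_neg at hcon
        obtain ⟨hb0, hco⟩ := hcon
        have hout : ∀ l, l ≠ i → l ≠ j → Asym a k l = 0 := by
          intro l hli hlj
          have h0 := hco l
          rw [if_neg hli, if_neg hlj] at h0
          exact h0
        have hsum0 : Asym a k i + Asym a k j = 0 := by
          have h0 := hco j
          rw [if_neg (Ne.symm hij), if_pos rfl] at h0
          exact h0
        have hnz : Asym a k i ≠ 0 ∧ Asym a k j ≠ 0 := by
          rcases hE with hbk | ⟨l, hl⟩
          · exact absurd hb0 hbk
          · have heq := zfact3 _ _ hsum0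
            by_cases hli : l = i
            · rw [hli] at hl
              exact ⟨hl, by rw [← heq]; exact hl⟩
            · by_cases hlj : l = j
              · rw [hlj] at hl
                exact ⟨by rw [heq]; exact hl, hl⟩
              · exact absurd (hout l hli hlj) hl
        exact hBlk k ⟨hb0, hnz.1, hnz.2, hout⟩

end DevF

end Stmt5Aux

open Stmt5Aux

/-- If a Boolean function with at least four essential variables has Zhegalkin polynomial
of degree two, then its arity gap is one. -/
theorem stmt_5 {n : ℕ} (f : (Fin n → ZMod 2) → ZMod 2)
    (a : Fin n → Fin n → ZMod 2) (b : Fin n → ZMod 2) (c : ZMod 2)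
    (hrep : ∀ x : Fin n → ZMod 2,
      f x = (∑ p ∈ Finset.univ.filter (fun p : Fin n × Fin n => p.1 < p.2),
              a p.1 p.2 * x p.1 * x p.2) + (∑ i, b i * x i) + c)
    (hdeg : ∃ i j : Fin n, i < j ∧ a i j ≠ 0)
    (hess : 4 ≤ essArity f) :
    ∃ i j : Fin n, i ≠ j ∧ Essential f i ∧ Essential f j ∧
      essArity (idMinor f i j) = essArity f - 1 := by
  obtain ⟨p, q, hlt, hne⟩ := hdeg
  have hApq : Asym a p q ≠ 0 := by unfold Asym; rw [if_pos hlt]; exact hne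
  have hiff : ∀ k, Essential f k ↔ EssP (Asym a) b k := ess_f f a b c hrep
  have hsets : {k : Fin n | Essential f k} = {k : Fin n | EssP (Asym a) b k} :=
    Set.ext fun k => hiff k
  have hE4 : 4 ≤ Set.ncard {k : Fin n | EssP (Asym a) b k} := by
    rw [← hsets]; exact hess
  obtain ⟨i, j, hij, hEi, hEj, hT, hB⟩ :=
    exists_good (Asym a) b (Asym_symm a) (Asym_diag a) ⟨p, q, hApq⟩ hE4
  refine ⟨i, j, hij, (hiff i).2 hEi, (hiff j).2 hEj, ?_⟩
  have hset2 : {k : Fin n | Essential (idMinor f i j) k}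
      = {k : Fin n | Essential f k} \ {i} := by
    ext k
    simp only [Set.mem_setOf_eq, Set.mem_diff, Set.mem_singleton_iff]
    exact minor_ess_iff f a b c hrep i j hij hEj hT hB k
  have hiE : i ∈ {k : Fin n | Essential f k} := (hiff i).2 hEi
  have e1 : essArity (idMinor f i j) = Set.ncard ({k : Fin n | Essential f k} \ {i}) := by
    unfold essArity; rw [hset2]
  rw [e1, Set.ncard_diff_singleton_of_mem hiE]
  rfl
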